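/- For 0 < q < 1/2 and p = 1 - q, and any integer z ≥ 1, the quantity 1 - ∑_{k=0}^{z-1} (p^z q^k - q^z p^k) C(k+z-1, k) equals I_{4pq}(z, 1/2), where I_x(a,b) is the regularized incomplete beta function. -/

import Mathlib

open Real MeasureTheory

/-- Regularized incomplete beta function. -/
noncomputable def regIncBeta (x a b : ℝ) : ℝ :=
  (Real.Gamma (a + b) / (Real.Gamma a * Real.Gamma b)) *
    ∫ t in (0:ℝ)..x, t ^ (a - 1) * (1 - t) ^ (b - 1)

lemma tel (q p : ℝ) (hp : p = 1 - q) (m : ℕ) :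
    ∑ k ∈ Finset.range (m+2), p^(m+2) * q^k * (Nat.choose (k+m+1) k : ℝ)
    = (∑ k ∈ Finset.range (m+1), p^(m+1) * q^k * (Nat.choose (k+m) k : ℝ))
      + p^(m+1) * q^(m+1) * (Nat.choose (2*m+1) m : ℝ) * (p - q) := by
  have key : ∀ k ∈ Finset.range (m+1),
      p^(m+2) * q^k * (Nat.choose (k+m+1) k : ℝ)
        - p^(m+1) * q^k * (Nat.choose (k+m) k : ℝ)
      = (fun k => p^(m+1) * q^k * (Nat.choose (k+m) (m+1) : ℝ)) k
        - (fun k => p^(m+1) * q^k * (Nat.choose (k+m) (m+1) : ℝ)) (k+1) := by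
    intro k _
    simp only []
    have h1 : Nat.choose (k+m+1) k = Nat.choose (k+m+1) (m+1) := by
      rw [← Nat.choose_symm (by omega : m+1 ≤ k+m+1)]
      congr 1; omega
    have h2 : Nat.choose (k+m) k = Nat.choose (k+m) m := by
      rw [← Nat.choose_symm (by omega : m ≤ k+m)]
      congr 1; omega
    have h3 : Nat.choose (k+m+1) (m+1) = Nat.choose (k+m) m + Nat.choose (k+m) (m+1) :=
      Nat.choose_succ_succ _ _
    have h4 : (k+1)+m = k+m+1 := by omega
    rw [h1, h2, h3, h4, h3]
    push_cast
    subst hp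
    ring
  have tsum : ∑ k ∈ Finset.range (m+1),
      ((fun k => p^(m+1) * q^k * (Nat.choose (k+m) (m+1) : ℝ)) k
        - (fun k => p^(m+1) * q^k * (Nat.choose (k+m) (m+1) : ℝ)) (k+1))
      = p^(m+1) * q^0 * (Nat.choose (0+m) (m+1) : ℝ)
        - p^(m+1) * q^(m+1) * (Nat.choose ((m+1)+m) (m+1) : ℝ) :=
    Finset.sum_range_sub' _ _
  rw [Finset.sum_range_succ]
  have split : ∑ k ∈ Finset.range (m+1), p^(m+2) * q^k * (Nat.choose (k+m+1) k : ℝ)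
      = (∑ k ∈ Finset.range (m+1), p^(m+1) * q^k * (Nat.choose (k+m) k : ℝ))
        + ∑ k ∈ Finset.range (m+1),
          ((fun k => p^(m+1) * q^k * (Nat.choose (k+m) (m+1) : ℝ)) k
            - (fun k => p^(m+1) * q^k * (Nat.choose (k+m) (m+1) : ℝ)) (k+1)) := by
    rw [← Finset.sum_add_distrib]
    refine Finset.sum_congr rfl fun k hk => ?_
    have := key k hk
    linarith [this]
  rw [split, tsum]
  have hz : Nat.choose (0+m) (m+1) = 0 := by
    apply Nat.choose_eq_zero_of_lt; omega
  have hsym : Nat.choose ((m+1)+m) (m+1) = Nat.choose (2*m+1) m := by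
    have : (m+1)+m = 2*m+1 := by omega
    rw [this, ← Nat.choose_symm (by omega : m+1 ≤ 2*m+1)]
    congr 1; omega
  have hpas : Nat.choose ((m+1)+m+1) (m+1) = Nat.choose (2*m+1) m + Nat.choose (2*m+1) m := by
    have h4 : (m+1)+m+1 = (2*m+1)+1 := by omega
    rw [h4, Nat.choose_succ_succ]
    have hx : Nat.choose (2*m+1) (m+1) = Nat.choose (2*m+1) m := by
      rw [← Nat.choose_symm (by omega : m+1 ≤ 2*m+1)]; congr 1; omega
    simp only [Nat.succ_eq_add_one]
    omega
  rw [hz, hsym, hpas]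
  push_cast
  subst hp
  ring
lemma contOn (f : ℝ → ℝ) (hf : Continuous f) {x : ℝ} (hx1 : x < 1) (hx0 : 0 ≤ x) :
    ContinuousOn (fun t => f t / Real.sqrt (1-t)) (Set.uIcc 0 x) := by
  apply ContinuousOn.div hf.continuousOn
  · exact (Real.continuous_sqrt.comp (continuous_const.sub continuous_id)).continuousOn
  · intro t ht
    rw [Set.uIcc_of_le hx0] at ht
    have : (0:ℝ) < 1 - t := by
      have := ht.2; linarith
    exact ne_of_gt (Real.sqrt_pos.mpr this)
lemma intOn (f : ℝ → ℝ) (hf : Continuous f) {x : ℝ} (hx1 : x < 1) (hx0 : 0 ≤ x) :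
    IntervalIntegrable (fun t => f t / Real.sqrt (1-t)) volume 0 x :=
  (contOn f hf hx1 hx0).intervalIntegrable

lemma sqrtDeriv {t : ℝ} (ht : t < 1) :
    HasDerivAt (fun t : ℝ => Real.sqrt (1-t)) (-(1/(2*Real.sqrt (1-t)))) t := by
  have h0 : (1:ℝ) - t ≠ 0 := by linarith
  have h1 : HasDerivAt (fun t : ℝ => 1 - t) (-1) t := (hasDerivAt_id t).const_sub 1
  have := (Real.hasDerivAt_sqrt h0).comp t h1
  refine HasDerivAt.congr_deriv this ?_
  ring
lemma Gbase {x : ℝ} (hx1 : x < 1) (hx0 : 0 ≤ x) :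
    ∫ t in (0:ℝ)..x, t^0 / Real.sqrt (1-t) = 2 - 2 * Real.sqrt (1-x) := by
  have hD : ∀ t ∈ Set.uIcc (0:ℝ) x, HasDerivAt (fun t : ℝ => -2 * Real.sqrt (1-t))
      (t^0 / Real.sqrt (1-t)) t := by
    intro t ht
    rw [Set.uIcc_of_le hx0] at ht
    have ht1 : t < 1 := lt_of_le_of_lt ht.2 hx1
    have := (sqrtDeriv ht1).const_mul (-2 : ℝ)
    refine HasDerivAt.congr_deriv this ?_
    rw [pow_zero]
    ring
  have := intervalIntegral.integral_eq_sub_of_hasDerivAt hD (intOn _ (continuous_pow 0) hx1 hx0)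
  rw [this]
  simp [Real.sqrt_one]
  ring
lemma Grec (n : ℕ) {x : ℝ} (hx1 : x < 1) (hx0 : 0 ≤ x) :
    ((n:ℝ)+1) * ∫ t in (0:ℝ)..x, t^n / Real.sqrt (1-t)
    = ((n:ℝ)+3/2) * (∫ t in (0:ℝ)..x, t^(n+1) / Real.sqrt (1-t))
      + x^(n+1) * Real.sqrt (1-x) := by
  have hD : ∀ t ∈ Set.uIcc (0:ℝ) x, HasDerivAt (fun t : ℝ => t^(n+1) * Real.sqrt (1-t))
      ((((n:ℝ)+1) * t^n - ((n:ℝ)+3/2) * t^(n+1)) / Real.sqrt (1-t)) t := by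
    intro t ht
    rw [Set.uIcc_of_le hx0] at ht
    have ht1 : t < 1 := lt_of_le_of_lt ht.2 hx1
    have hpos : (0:ℝ) < 1 - t := by linarith
    have hs : Real.sqrt (1-t) * Real.sqrt (1-t) = 1 - t := Real.mul_self_sqrt (le_of_lt hpos)
    have hsne : Real.sqrt (1-t) ≠ 0 := ne_of_gt (Real.sqrt_pos.mpr hpos)
    have h1 : HasDerivAt (fun t : ℝ => t^(n+1)) (((n:ℝ)+1) * t^n) t := by
      simpa using hasDerivAt_pow (n+1) t
    have := h1.mul (sqrtDeriv ht1)
    refine HasDerivAt.congr_deriv this ?_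
    have hs2 : Real.sqrt (1-t)^2 = 1 - t := Real.sq_sqrt hpos.le
    field_simp
    linear_combination (2*((n:ℝ)+1)*t^n) * hs2
  have key := intervalIntegral.integral_eq_sub_of_hasDerivAt hD
    ((contOn (fun t => ((n:ℝ)+1) * t^n - ((n:ℝ)+3/2) * t^(n+1))
      (by continuity) hx1 hx0).intervalIntegrable)
  have expand : ∫ t in (0:ℝ)..x, (((n:ℝ)+1) * t^n - ((n:ℝ)+3/2) * t^(n+1)) / Real.sqrt (1-t)
      = ((n:ℝ)+1) * (∫ t in (0:ℝ)..x, t^n / Real.sqrt (1-t))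
        - ((n:ℝ)+3/2) * ∫ t in (0:ℝ)..x, t^(n+1) / Real.sqrt (1-t) := by
    rw [← intervalIntegral.integral_const_mul, ← intervalIntegral.integral_const_mul,
      ← intervalIntegral.integral_sub
        ((intOn _ (continuous_pow n) hx1 hx0).const_mul _)
        ((intOn _ (continuous_pow (n+1)) hx1 hx0).const_mul _)]
    congr 1
    funext t
    ring
  rw [expand] at key
  have h0 : (0:ℝ)^(n+1) = 0 := by simp
  rw [h0] at key
  simp at key
  linarith
lemma ccval (m : ℕ) : Real.Gamma ((m:ℝ)+1 + 1/2) / (Real.Gamma ((m:ℝ)+1) * Real.sqrt π)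
    = ((m:ℝ)+1) * (Nat.choose (2*(m+1)) (m+1) : ℝ) / 4^(m+1) := by
  have hπ : Real.sqrt π ≠ 0 := ne_of_gt (Real.sqrt_pos.mpr Real.pi_pos)
  induction m with
  | zero =>
    have h1 : ((0:ℕ):ℝ) + 1 + 1/2 = 1/2 + 1 := by norm_num
    rw [h1, Real.Gamma_add_one (by norm_num), Real.Gamma_one_half_eq]
    field_simp
    norm_num [Nat.choose]
  | succ m ih =>
    have hb : Real.Gamma ((m:ℝ)+1) ≠ 0 := ne_of_gt (Real.Gamma_pos_of_pos (by positivity))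
    have hg1 : Real.Gamma (((m+1:ℕ):ℝ)+1+1/2) = ((m:ℝ)+1+1/2) * Real.Gamma ((m:ℝ)+1+1/2) := by
      push_cast
      rw [show (m:ℝ)+1+1+1/2 = ((m:ℝ)+1+1/2)+1 by ring, Real.Gamma_add_one (by positivity)]
    have hg2 : Real.Gamma (((m+1:ℕ):ℝ)+1) = ((m:ℝ)+1) * Real.Gamma ((m:ℝ)+1) := by
      push_cast
      rw [show (m:ℝ)+1+1 = ((m:ℝ)+1)+1 by ring, Real.Gamma_add_one (by positivity)]
    have hcb : ((m:ℝ)+2) * (Nat.choose (2*(m+1+1)) (m+1+1) : ℝ)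
        = 2*(2*(m:ℝ)+3) * (Nat.choose (2*(m+1)) (m+1) : ℝ) := by
      have := Nat.succ_mul_centralBinom_succ (m+1)
      rw [Nat.centralBinom, Nat.centralBinom] at this
      have h' : ((m+1+1) * Nat.choose (2*(m+1+1)) (m+1+1) : ℕ)
          = (2 * (2*(m+1)+1) * Nat.choose (2*(m+1)) (m+1) : ℕ) := this
      have := congrArg (fun n : ℕ => (n:ℝ)) h'
      push_cast at this ⊢
      linarith [this]
    have ha : Real.Gamma ((m:ℝ)+1+1/2)
        = ((m:ℝ)+1) * (Nat.choose (2*(m+1)) (m+1) : ℝ) / 4^(m+1)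
          * (Real.Gamma ((m:ℝ)+1) * Real.sqrt π) := by
      field_simp at ih
      field_simp
      linarith [ih]
    rw [hg1, hg2, ha]
    have h4 : (4:ℝ)^(m+1+1) = 4 * 4^(m+1) := by ring
    push_cast
    rw [h4]
    field_simp
    linear_combination (-2:ℝ) * hcb
theorem stmt0 (q : ℝ) (hq0 : 0 < q) (hq1 : q < 1/2) (p : ℝ) (hp : p = 1 - q)
    (z : ℕ) (hz : 1 ≤ z) :
    1 - ∑ k ∈ Finset.range z,
        (p ^ z * q ^ k - q ^ z * p ^ k) * (Nat.choose (k + z - 1) k : ℝ)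
      = regIncBeta (4 * p * q) (z : ℝ) (1/2) := by
  obtain ⟨m, rfl⟩ : ∃ m, z = m + 1 := ⟨z - 1, by omega⟩
  have hp0 : 0 < p := by rw [hp]; linarith
  set x := 4*p*q with hxdef
  have hx0 : 0 < x := by positivity
  have hx1 : x < 1 := by rw [hxdef, hp]; nlinarith [sq_nonneg (1-2*q)]
  have hsx : Real.sqrt (1-x) = p - q := by
    have h1 : 1 - x = (p-q)^2 := by rw [hxdef, hp]; ring
    rw [h1, Real.sqrt_sq (by rw [hp]; linarith)]
  have main : ∀ n : ℕ,
      1 - ∑ k ∈ Finset.range (n+1), (p^(n+1)*q^k - q^(n+1)*p^k) * (Nat.choose (k+n) k : ℝ)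
      = (((n:ℝ)+1) * (Nat.choose (2*(n+1)) (n+1) : ℝ) / 4^(n+1))
          * ∫ t in (0:ℝ)..x, t^n / Real.sqrt (1-t) := by
    intro n
    induction n with
    | zero =>
      rw [Gbase hx1 hx0.le, hsx]
      simp [Finset.sum_range_one, Nat.choose]
      ring
    | succ n ih =>
      have e1 : n+1+1 = n+2 := rfl
      have e2 : ∀ k : ℕ, k+(n+1) = k+n+1 := fun _ => rfl
      simp only [e1, e2]
      push_cast
      have t1 := tel q p hp n
      have t2 := tel p q (by rw [hp]; ring) n
      have h1 : ∑ k ∈ Finset.range (n+2), (p^(n+2)*q^k - q^(n+2)*p^k) * (Nat.choose (k+n+1) k : ℝ)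
          = (∑ k ∈ Finset.range (n+2), p^(n+2)*q^k * (Nat.choose (k+n+1) k : ℝ))
            - ∑ k ∈ Finset.range (n+2), q^(n+2)*p^k * (Nat.choose (k+n+1) k : ℝ) := by
        rw [← Finset.sum_sub_distrib]
        exact Finset.sum_congr rfl fun k _ => by ring
      have h2 : ∑ k ∈ Finset.range (n+1), (p^(n+1)*q^k - q^(n+1)*p^k) * (Nat.choose (k+n) k : ℝ)
          = (∑ k ∈ Finset.range (n+1), p^(n+1)*q^k * (Nat.choose (k+n) k : ℝ))
            - ∑ k ∈ Finset.range (n+1), q^(n+1)*p^k * (Nat.choose (k+n) k : ℝ) := by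
        rw [← Finset.sum_sub_distrib]
        exact Finset.sum_congr rfl fun k _ => by ring
      have hsum : ∑ k ∈ Finset.range (n+2), (p^(n+2)*q^k - q^(n+2)*p^k) * (Nat.choose (k+n+1) k : ℝ)
          = (∑ k ∈ Finset.range (n+1), (p^(n+1)*q^k - q^(n+1)*p^k) * (Nat.choose (k+n) k : ℝ))
            + 2*(Nat.choose (2*n+1) n : ℝ)*(p^(n+1)*q^(n+1))*(p-q) := by
        linear_combination h1 - h2 + t1 - t2
      have hCnat : Nat.choose (2*(n+1)) (n+1) = 2 * Nat.choose (2*n+1) n := by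
        have h4 : 2*(n+1) = (2*n+1)+1 := by omega
        rw [h4, Nat.choose_succ_succ]
        have hx : Nat.choose (2*n+1) (n+1) = Nat.choose (2*n+1) n := by
          rw [← Nat.choose_symm (by omega : n+1 ≤ 2*n+1)]; congr 1; omega
        simp only [Nat.succ_eq_add_one]
        omega
      have hC : (Nat.choose (2*(n+1)) (n+1) : ℝ) = 2 * (Nat.choose (2*n+1) n : ℝ) := by
        exact_mod_cast hCnat
      have hnat : (n+2) * Nat.choose (2*(n+2)) (n+2) = 2*(2*n+3) * Nat.choose (2*(n+1)) (n+1) := by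
        have h := Nat.succ_mul_centralBinom_succ (n+1)
        rw [Nat.centralBinom_eq_two_mul_choose, Nat.centralBinom_eq_two_mul_choose] at h
        exact h
      have hcbR : ((n:ℝ)+2) * (Nat.choose (2*(n+2)) (n+2) : ℝ)
          = 2*(2*(n:ℝ)+3) * (Nat.choose (2*(n+1)) (n+1) : ℝ) := by
        exact_mod_cast hnat
      have grec := Grec n hx1 hx0.le
      rw [hsx] at grec
      have hxp : x^(n+1) = 4^(n+1) * (p^(n+1) * q^(n+1)) := by rw [hxdef]; ring
      have h4ne1 : ((4:ℝ))^(n+1) ≠ 0 := by positivity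
      have h4ne2 : ((4:ℝ))^(n+2) ≠ 0 := by positivity
      rw [div_mul_eq_mul_div, eq_div_iff h4ne2]
      rw [div_mul_eq_mul_div, eq_div_iff h4ne1] at ih
      linear_combination (4:ℝ)*ih - (4:ℝ)^(n+2)*hsum
        + (4*(Nat.choose (2*(n+1)) (n+1) : ℝ))*grec
        + (4*(Nat.choose (2*(n+1)) (n+1) : ℝ)*(p-q))*hxp
        + ((4:ℝ)^(n+2)*p^(n+1)*q^(n+1)*(p-q))*hC
        - (∫ t in (0:ℝ)..x, t^(n+1) / Real.sqrt (1-t))*hcbR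
  have e3 : ∀ k : ℕ, k + (m+1) - 1 = k + m := fun k => by omega
  simp only [e3, regIncBeta, Real.Gamma_one_half_eq]
  push_cast
  have hint : ∫ t in (0:ℝ)..x, t ^ ((m:ℝ)+1-1) * (1-t)^((1/2:ℝ)-1)
      = ∫ t in (0:ℝ)..x, t^m / Real.sqrt (1-t) := by
    apply intervalIntegral.integral_congr
    intro t ht
    rw [Set.uIcc_of_le hx0.le] at ht
    have ht1 : (0:ℝ) < 1 - t := by have := ht.2; linarith
    have hm : ((m:ℝ)+1-1) = ((m:ℕ):ℝ) := by ring
    have hh : ((1:ℝ)/2 - 1) = -(1/2) := by norm_num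
    simp only []
    rw [hm, Real.rpow_natCast, hh, Real.rpow_neg ht1.le, ← Real.sqrt_eq_rpow, div_eq_mul_inv]
  rw [hint, ccval m]
  exact main m
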